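/- The endomorphism φ of the free associative algebra K⟨x,y,z⟩ defined by φ(x) = x + z(xz − zy), φ(y) = y + (xz − zy)z, φ(z) = z is a K-algebra automorphism, with inverse given by ψ(x) = x − z(xz − zy), ψ(y) = y − (xz − zy)z, ψ(z) = z. -/
import Mathlib


open FreeAlgebra

/-- The endomorphism `φ` of the free associative algebra `K⟨x,y,z⟩` given by
`φ(x) = x + z(xz − zy)`, `φ(y) = y + (xz − zy)z`, `φ(z) = z` is a `K`-algebra automorphism,
with inverse `ψ(x) = x − z(xz − zy)`, `ψ(y) = y − (xz − zy)z`, `ψ(z) = z`. -/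
theorem anick_variant_is_automorphism (K : Type*) [Field K] :
    (FreeAlgebra.lift K
          ![ι K 0 + ι K 2 * (ι K 0 * ι K 2 - ι K 2 * ι K 1),
            ι K 1 + (ι K 0 * ι K 2 - ι K 2 * ι K 1) * ι K 2,
            (ι K 2 : FreeAlgebra K (Fin 3))]).comp
        (FreeAlgebra.lift K
          ![ι K 0 - ι K 2 * (ι K 0 * ι K 2 - ι K 2 * ι K 1),
            ι K 1 - (ι K 0 * ι K 2 - ι K 2 * ι K 1) * ι K 2,
            (ι K 2 : FreeAlgebra K (Fin 3))]) = AlgHom.id K (FreeAlgebra K (Fin 3)) ∧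
    (FreeAlgebra.lift K
          ![ι K 0 - ι K 2 * (ι K 0 * ι K 2 - ι K 2 * ι K 1),
            ι K 1 - (ι K 0 * ι K 2 - ι K 2 * ι K 1) * ι K 2,
            (ι K 2 : FreeAlgebra K (Fin 3))]).comp
        (FreeAlgebra.lift K
          ![ι K 0 + ι K 2 * (ι K 0 * ι K 2 - ι K 2 * ι K 1),
            ι K 1 + (ι K 0 * ι K 2 - ι K 2 * ι K 1) * ι K 2,
            (ι K 2 : FreeAlgebra K (Fin 3))]) = AlgHom.id K (FreeAlgebra K (Fin 3)) := by
  constructor <;>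
  · apply FreeAlgebra.hom_ext
    funext i
    fin_cases i <;>
      simp [AlgHom.comp_apply, Matrix.cons_val_zero, Matrix.cons_val_one,
        Matrix.head_cons, map_add, map_sub, map_mul] <;>
      noncomm_ring
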